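/- Let {|ψ¹_j⟩}_{j=1,…,N} be linearly independent unit vectors in ℂ^D and {|ψ²_j⟩}_{j=1,…,N} unit vectors in ℂ^D, with Gram matrices Γ₁ and Γ₂ respectively. Suppose there exists an N×N complex matrix Π such that: (1.a) Π is positive semidefinite; (1.b) the diagonal entries of Π satisfy Π_{jj} = p_j for a given vector p = (p_j); (1.c) Γ₁ − Π∘Γ₂ is positive semidefinite. Then there exists a finite family of linear operators {A_k}_{k=1,…,M} on ℂ^D with Σ_k A_k†A_k ≤ 1 such that for each k and j, A_k|ψ¹_j⟩ = c_{kj}|ψ²_j⟩ for some complex scalars c_{kj}, and ⟨ψ¹_j|(Σ_k A_k†A_k)|ψ¹_j⟩ = Σ_k |c_{kj}|² = p_j for every j. -/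

import Mathlib

open Matrix BigOperators
open scoped ComplexOrder

/-- **Theorem 1, sufficiency.**  If the initial unit vectors `ψ1 j` are linearly
independent and there is an `N × N` matrix `Π` that is positive semidefinite,
has diagonal `p`, and is such that `Γ₁ - Π ∘ Γ₂` is positive semidefinite, then
there is a probabilistic transformation taking `ψ1 j` to `ψ2 j` with
probability vector `p`. -/
theorem theorem1_sufficiency {D N : ℕ}
    (ψ1 ψ2 : Fin N → (Fin D → ℂ))
    (hψ1unit : ∀ j, star (ψ1 j) ⬝ᵥ ψ1 j = 1)
    (hψ2unit : ∀ j, star (ψ2 j) ⬝ᵥ ψ2 j = 1)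
    (hindep : LinearIndependent ℂ ψ1)
    (Γ1 Γ2 : Matrix (Fin N) (Fin N) ℂ)
    (hΓ1 : ∀ j' j, Γ1 j' j = star (ψ1 j') ⬝ᵥ ψ1 j)
    (hΓ2 : ∀ j' j, Γ2 j' j = star (ψ2 j') ⬝ᵥ ψ2 j)
    (p : Fin N → ℝ)
    (Pmat : Matrix (Fin N) (Fin N) ℂ)
    (hPos : Pmat.PosSemidef)
    (hDiag : ∀ j, Pmat j j = (p j : ℂ))
    (hG : (Γ1 - Matrix.hadamard Pmat Γ2).PosSemidef) :
    ∃ (M : ℕ) (A : Fin M → Matrix (Fin D) (Fin D) ℂ) (c : Fin M → Fin N → ℂ),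
      (1 - ∑ k, (A k)ᴴ * A k).PosSemidef ∧
      (∀ k j, (A k) *ᵥ ψ1 j = c k j • ψ2 j) ∧
      (∀ j, star (ψ1 j) ⬝ᵥ ((∑ k, (A k)ᴴ * A k) *ᵥ ψ1 j) = (p j : ℂ)) ∧
      (∀ j, ∑ k, ‖c k j‖ ^ 2 = p j) := by
  classical
  open scoped MatrixOrder in
  obtain ⟨B, hB⟩ := CStarAlgebra.nonneg_iff_eq_star_mul_self.mp hPos.nonneg
  rw [Matrix.star_eq_conjTranspose] at hB
  set Ψ1 : Matrix (Fin D) (Fin N) ℂ := Matrix.of fun b j => ψ1 j b with hΨ1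
  set Ψ2 : Matrix (Fin D) (Fin N) ℂ := Matrix.of fun b j => ψ2 j b with hΨ2
  have hG1 : Γ1 = Ψ1ᴴ * Ψ1 := by
    ext j' j
    simp [hΓ1, hΨ1, Matrix.mul_apply, Matrix.conjTranspose_apply, dotProduct]
  have hG2 : Γ2 = Ψ2ᴴ * Ψ2 := by
    ext j' j
    simp [hΓ2, hΨ2, Matrix.mul_apply, Matrix.conjTranspose_apply, dotProduct]
  -- ψ1 j = Ψ1 *ᵥ (single j)
  have hcol1 : ∀ j, Ψ1 *ᵥ Pi.single j 1 = ψ1 j := by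
    intro j; ext b
    simp [Matrix.mulVec, dotProduct, Pi.single_apply, hΨ1]
  have hcol2 : ∀ j, Ψ2 *ᵥ Pi.single j 1 = ψ2 j := by
    intro j; ext b
    simp [Matrix.mulVec, dotProduct, Pi.single_apply, hΨ2]
  -- Γ1 is positive definite
  have hΓ1pd : Γ1.PosDef := by
    rw [hG1]
    refine Matrix.PosDef.of_dotProduct_mulVec_pos (Matrix.isHermitian_conjTranspose_mul_self Ψ1) fun x hx => ?_
    have key : star x ⬝ᵥ ((Ψ1ᴴ * Ψ1) *ᵥ x) = star (Ψ1 *ᵥ x) ⬝ᵥ (Ψ1 *ᵥ x) := by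
      rw [← Matrix.mulVec_mulVec, Matrix.dotProduct_mulVec, ← Matrix.star_mulVec]
    rw [key]
    apply Matrix.dotProduct_star_self_pos_iff.mpr
    intro h0
    apply hx
    have := Fintype.linearIndependent_iff.mp hindep x ?_
    · ext j; exact this j
    · ext b
      have := congrFun h0 b
      simpa [Matrix.mulVec, dotProduct, hΨ1, Finset.sum_apply, mul_comm] using this
  have hdet : IsUnit Γ1.det := (Matrix.isUnit_iff_isUnit_det _).mp hΓ1pd.isUnit
  have hinvmul : Γ1⁻¹ * Γ1 = 1 := Matrix.nonsing_inv_mul _ hdet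
  have hinvherm : (Γ1⁻¹).IsHermitian := hΓ1pd.isHermitian.inv
  set E : Matrix (Fin N) (Fin D) ℂ := Γ1⁻¹ * Ψ1ᴴ with hE
  have hEΨ : E * Ψ1 = 1 := by rw [hE, Matrix.mul_assoc, ← hG1, hinvmul]
  have hEH : Eᴴ = Ψ1 * Γ1⁻¹ := by
    rw [hE, Matrix.conjTranspose_mul, Matrix.conjTranspose_conjTranspose, hinvherm.eq]
  have hEv : ∀ j, E *ᵥ ψ1 j = Pi.single j 1 := by
    intro j
    rw [← hcol1 j, Matrix.mulVec_mulVec, hEΨ, Matrix.one_mulVec]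
  set Mh : Matrix (Fin N) (Fin N) ℂ := Matrix.hadamard Pmat Γ2 with hMh
  set A : Fin N → Matrix (Fin D) (Fin D) ℂ :=
    fun k => Ψ2 * Matrix.diagonal (B k) * E with hA
  -- the key identity
  have hsum : ∑ k, (A k)ᴴ * A k = Eᴴ * Mh * E := by
    have h1 : ∀ k, (A k)ᴴ * A k
        = Eᴴ * (Matrix.diagonal (star ∘ B k) * Γ2 * Matrix.diagonal (B k)) * E := by
      intro k
      rw [hA]
      simp only [Matrix.conjTranspose_mul, Matrix.diagonal_conjTranspose]
      rw [hG2]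
      simp only [Matrix.mul_assoc]
      rfl
    rw [Finset.sum_congr rfl fun k _ => h1 k]
    rw [← Matrix.sum_mul, ← Matrix.mul_sum]
    congr 1
    congr 1
    rw [hMh]
    ext j' j
    simp only [Matrix.sum_apply, Matrix.diagonal_mul, Matrix.mul_diagonal,
      Matrix.hadamard_apply, Function.comp]
    rw [hB]
    rw [Matrix.mul_apply]
    rw [Finset.sum_mul]
    refine Finset.sum_congr rfl fun k _ => ?_
    simp [Matrix.conjTranspose_apply]
    ring
  refine ⟨N, A, fun k j => B k j, ?_, ?_, ?_, ?_⟩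
  · -- PSD of 1 - sum
    rw [hsum]
    have hP : Eᴴ * Γ1 * E = Ψ1 * Γ1⁻¹ * Ψ1ᴴ := by
      rw [hEH, Matrix.mul_assoc Ψ1 Γ1⁻¹ Γ1, hinvmul, Matrix.mul_one, hE, ← Matrix.mul_assoc]
    set P : Matrix (Fin D) (Fin D) ℂ := Ψ1 * Γ1⁻¹ * Ψ1ᴴ with hPdef
    have hPH : Pᴴ = P := by
      rw [hPdef]
      simp only [Matrix.conjTranspose_mul, Matrix.conjTranspose_conjTranspose, hinvherm.eq]
      rw [Matrix.mul_assoc]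
    have hPP : P * P = P := by
      rw [hPdef]
      have : Ψ1ᴴ * (Ψ1 * Γ1⁻¹) = 1 := by
        rw [← Matrix.mul_assoc, ← hG1, Matrix.mul_nonsing_inv _ hdet]
      calc Ψ1 * Γ1⁻¹ * Ψ1ᴴ * (Ψ1 * Γ1⁻¹ * Ψ1ᴴ)
          = Ψ1 * Γ1⁻¹ * (Ψ1ᴴ * (Ψ1 * Γ1⁻¹)) * Ψ1ᴴ := by
            simp only [Matrix.mul_assoc]
        _ = Ψ1 * Γ1⁻¹ * Ψ1ᴴ := by rw [this, Matrix.mul_one]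
    have h1P : (1 - P).PosSemidef := by
      have : (1 - P)ᴴ * (1 - P) = 1 - P := by
        rw [Matrix.conjTranspose_sub, Matrix.conjTranspose_one, hPH]
        rw [Matrix.sub_mul, Matrix.mul_sub, Matrix.mul_sub, hPP]
        simp [Matrix.one_mul, Matrix.mul_one]
      rw [← this]
      exact Matrix.posSemidef_conjTranspose_mul_self _
    have h2 : (Eᴴ * (Γ1 - Mh) * E).PosSemidef := hG.conjTranspose_mul_mul_same E
    have key : 1 - Eᴴ * Mh * E = (1 - P) + Eᴴ * (Γ1 - Mh) * E := by
      rw [Matrix.mul_sub, Matrix.sub_mul, ← hP]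
      abel
    rw [key]
    exact h1P.add h2
  · intro k j
    rw [hA]
    rw [← Matrix.mulVec_mulVec, ← Matrix.mulVec_mulVec, hEv j]
    have hd : Matrix.diagonal (B k) *ᵥ Pi.single j 1 = B k j • (Pi.single j 1 : Fin N → ℂ) := by
      ext i
      simp [Matrix.mulVec, dotProduct, Matrix.diagonal_apply, Pi.single_apply]
      by_cases h : i = j <;> simp [h]
    rw [hd, Matrix.mulVec_smul, hcol2 j]
  · intro j
    rw [hsum]
    rw [← Matrix.mulVec_mulVec, ← Matrix.mulVec_mulVec, hEv j,
      Matrix.dotProduct_mulVec, ← Matrix.star_mulVec, hEv j]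
    have : star (Pi.single j (1:ℂ)) = (Pi.single j 1 : Fin N → ℂ) := by
      ext i
      rcases eq_or_ne i j with h | h <;> simp [Pi.single_apply, h]
    rw [this]
    have : Pi.single j (1:ℂ) ⬝ᵥ (Mh *ᵥ Pi.single j 1) = Mh j j := by
      simp [dotProduct, Matrix.mulVec, Pi.single_apply]
    rw [this, hMh, Matrix.hadamard_apply, hDiag, hΓ2, hψ2unit, mul_one]

  · intro j
    have h1 : (Pmat j j : ℂ) = ∑ k, (‖B k j‖ ^ 2 : ℂ) := by
      rw [hB, Matrix.mul_apply]
      refine Finset.sum_congr rfl fun k _ => ?_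
      rw [Matrix.conjTranspose_apply, Complex.star_def, mul_comm, Complex.mul_conj]
      norm_cast
      simp [Complex.normSq_eq_norm_sq]
    rw [hDiag] at h1
    have h2 : ((p j : ℂ)) = ((∑ k, ‖B k j‖ ^ 2 : ℝ) : ℂ) := by
      rw [h1]; push_cast; rfl
    exact_mod_cast h2.symm
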